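/- The function E(s) = x(s)^{2n-1} cos σ(s) / sqrt(x(s)^2 sin^2 σ(s) + cos^2 σ(s)) − H x(s)^{2n} is constant along any solution (x, t, σ) of the system x' = sin σ, t' = cos σ, σ' = (2n−1) cos^3 σ / x^3 + 2(n−1) sin^2 σ cos σ / x − 2nH (x^2 sin^2 σ + cos^2 σ)^{3/2} / x^2, wherever x > 0. -/

import Mathlib

open Real Set

/-- Key algebraic identity (polynomial certificate). -/
private lemma key_identity (X S C r H N Y W : ℝ)
    (g0 : W * X^3 = (2*N-1)*C^3 + 2*(N-1)*S^2*C*X^2 - 2*N*H*(X^2*S^2+C^2)*r*X)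
    (g1 : r^2 = X^2*S^2 + C^2)
    (g2 : S^2 + C^2 = 1) :
    2*r^2*((2*N-1)*Y*S*C - Y*X*S*W) - (Y*X*C)*(2*X*S^3 + X^2*(2*S*C*W) + 2*C*(-(S*W)))
      = H*(2*N*Y*X*S)*r^2*(2*r) := by
  linear_combination (-2*S*Y) * g0
    + ((4*N-2)*S*C*Y - 2*X*S*Y*W - 4*X*S*r*H*N*Y) * g1
    + (-2*X^3*S*Y*W) * g2

/-- The energy `E(s) = x^{2n-1} cos σ / sqrt(x² sin²σ + cos²σ) - H x^{2n}` is constant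
along any solution of the CMC ODE system for rotationally invariant hypersurfaces in ℍⁿ. -/
theorem energy_first_integral (n : ℕ) (hn : 1 ≤ n) (H : ℝ) (a b : ℝ)
    (x t σ : ℝ → ℝ)
    (hx : ∀ s ∈ Ioo a b, 0 < x s)
    (hx' : ∀ s ∈ Ioo a b, HasDerivAt x (Real.sin (σ s)) s)
    (ht' : ∀ s ∈ Ioo a b, HasDerivAt t (Real.cos (σ s)) s)
    (hσ' : ∀ s ∈ Ioo a b, HasDerivAt σ
      ((2*(n:ℝ)-1) * Real.cos (σ s)^3 / (x s)^3
        + 2*((n:ℝ)-1) * Real.sin (σ s)^2 * Real.cos (σ s) / x s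
        - 2*(n:ℝ)*H*((x s)^2*Real.sin (σ s)^2 + Real.cos (σ s)^2)^((3:ℝ)/2)/(x s)^2) s) :
    ∀ s₁ ∈ Ioo a b, ∀ s₂ ∈ Ioo a b,
      x s₁ ^ (2*n-1) * Real.cos (σ s₁) /
          Real.sqrt ((x s₁)^2 * Real.sin (σ s₁)^2 + Real.cos (σ s₁)^2) - H * x s₁ ^ (2*n)
        = x s₂ ^ (2*n-1) * Real.cos (σ s₂) /
          Real.sqrt ((x s₂)^2 * Real.sin (σ s₂)^2 + Real.cos (σ s₂)^2) - H * x s₂ ^ (2*n) := by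
  obtain ⟨k, rfl⟩ : ∃ k, n = k + 1 := ⟨n - 1, by omega⟩
  have hm1 : 2 * (k + 1) - 1 = 2 * k + 1 := by omega
  have hm2 : 2 * (k + 1) = 2 * k + 2 := by omega
  intro s₁ hs₁ s₂ hs₂
  set E : ℝ → ℝ := fun u =>
    x u ^ (2*k+1) * Real.cos (σ u) /
      Real.sqrt ((x u)^2 * Real.sin (σ u)^2 + Real.cos (σ u)^2) - H * x u ^ (2*k+2) with hE
  -- derivative of E is zero on Ioo a b
  have hDeriv : ∀ s ∈ Ioo a b, HasDerivAt E 0 s := by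
    intro s hs
    set X := x s
    set S := Real.sin (σ s)
    set C := Real.cos (σ s)
    obtain ⟨W, hW⟩ : ∃ W : ℝ, W = (2*((k:ℝ)+1)-1) * C^3 / X^3 + 2*(((k:ℝ)+1)-1) * S^2 * C / X
      - 2*((k:ℝ)+1)*H*(X^2*S^2 + C^2)^((3:ℝ)/2)/X^2 := ⟨_, rfl⟩
    have hXpos : 0 < X := hx s hs
    have hpy : S^2 + C^2 = 1 := sin_sq_add_cos_sq (σ s)
    have hQpos : 0 < X^2*S^2 + C^2 := by nlinarith [sq_nonneg (X*S), sq_nonneg C, sq_nonneg S, mul_pos hXpos hXpos, sq_nonneg (X*S*C)]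
    set r := Real.sqrt (X^2*S^2 + C^2) with hr
    have hrpos : 0 < r := Real.sqrt_pos.2 hQpos
    have hr2 : r^2 = X^2*S^2 + C^2 := Real.sq_sqrt hQpos.le
    have hσs : HasDerivAt σ W s := by
      have := hσ' s hs
      rw [hW]
      push_cast at this ⊢
      convert this using 2 <;> ring
    have hxs : HasDerivAt x S s := hx' s hs
    have hsin : HasDerivAt (fun u => Real.sin (σ u)) (C * W) s :=
      (Real.hasDerivAt_sin (σ s)).comp s hσs
    have hcos : HasDerivAt (fun u => Real.cos (σ u)) (-S * W) s :=
      (Real.hasDerivAt_cos (σ s)).comp s hσs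
    have hq : HasDerivAt (fun u => (x u)^2 * Real.sin (σ u)^2 + Real.cos (σ u)^2)
        (((2:ℕ):ℝ) * X^(2-1) * S * S^2 + X^2 * (((2:ℕ):ℝ) * S^(2-1) * (C*W))
          + ((2:ℕ):ℝ) * C^(2-1) * (-S * W)) s :=
      ((hxs.pow 2).mul (hsin.pow 2)).add (hcos.pow 2)
    have hrD : HasDerivAt (fun u => Real.sqrt ((x u)^2 * Real.sin (σ u)^2 + Real.cos (σ u)^2))
        ((((2:ℕ):ℝ) * X^(2-1) * S * S^2 + X^2 * (((2:ℕ):ℝ) * S^(2-1) * (C*W))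
          + ((2:ℕ):ℝ) * C^(2-1) * (-S * W)) / (2 * r)) s :=
      hq.sqrt hQpos.ne'
    have hP : HasDerivAt (fun u => x u ^ (2*k+1) * Real.cos (σ u))
        ((((2*k+1:ℕ):ℝ) * X^(2*k+1-1) * S) * C + X^(2*k+1) * (-S * W)) s :=
      (hxs.pow (2*k+1)).mul hcos
    have hE1 : HasDerivAt (fun u => x u ^ (2*k+1) * Real.cos (σ u) /
        Real.sqrt ((x u)^2 * Real.sin (σ u)^2 + Real.cos (σ u)^2))
        ((((((2*k+1:ℕ):ℝ) * X^(2*k+1-1) * S) * C + X^(2*k+1) * (-S * W)) * r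
          - (X^(2*k+1) * C) * ((((2:ℕ):ℝ) * X^(2-1) * S * S^2 + X^2 * (((2:ℕ):ℝ) * S^(2-1) * (C*W))
            + ((2:ℕ):ℝ) * C^(2-1) * (-S * W)) / (2 * r))) / r^2) s :=
      hP.div hrD hrpos.ne'
    have hE2 : HasDerivAt (fun u => H * x u ^ (2*k+2))
        (H * (((2*k+2:ℕ):ℝ) * X^(2*k+2-1) * S)) s :=
      (hxs.pow (2*k+2)).const_mul H
    have hEd := hE1.sub hE2
    -- show the derivative value is zero
    have hQ32 : (X^2*S^2 + C^2)^((3:ℝ)/2) = (X^2*S^2 + C^2) * r := by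
      rw [show (3:ℝ)/2 = 1 + 1/2 by norm_num, Real.rpow_add hQpos, Real.rpow_one,
        ← Real.sqrt_eq_rpow]
    have hWX : W * X^3 = (2*((k:ℝ)+1)-1)*C^3 + 2*(((k:ℝ)+1)-1)*S^2*C*X^2
        - 2*((k:ℝ)+1)*H*(X^2*S^2+C^2)*r*X := by
      rw [hW, hQ32]
      field_simp
    have key := key_identity X S C r H ((k:ℝ)+1) (X^(2*k)) W hWX hr2 hpy
    have h2r : (2*r) ≠ 0 := by positivity
    have hval : ((((2*k+1:ℕ):ℝ) * X^(2*k+1-1) * S) * C + X^(2*k+1) * (-S * W)) * r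
          - (X^(2*k+1) * C) * ((((2:ℕ):ℝ) * X^(2-1) * S * S^2 + X^2 * (((2:ℕ):ℝ) * S^(2-1) * (C*W))
            + ((2:ℕ):ℝ) * C^(2-1) * (-S * W)) / (2 * r))
        = H * (2*((k:ℝ)+1) * X^(2*k) * X * S) * r^2 := by
      rw [eq_comm, ← sub_eq_zero]
      have expand : ((((2*k+1:ℕ):ℝ) * X^(2*k+1-1) * S) * C + X^(2*k+1) * (-S * W)) * r
          - (X^(2*k+1) * C) * ((((2:ℕ):ℝ) * X^(2-1) * S * S^2 + X^2 * (((2:ℕ):ℝ) * S^(2-1) * (C*W))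
            + ((2:ℕ):ℝ) * C^(2-1) * (-S * W)) / (2 * r))
          = (2*r^2*((2*((k:ℝ)+1)-1)*(X^(2*k))*S*C - (X^(2*k))*X*S*W)
            - ((X^(2*k))*X*C)*(2*X*S^3 + X^2*(2*S*C*W) + 2*C*(-(S*W)))) / (2*r) := by
        rw [eq_div_iff h2r]
        simp only [Nat.add_sub_cancel, pow_succ]
        push_cast
        field_simp
        ring
      rw [expand, key, mul_div_cancel_right₀ _ h2r, sub_self]
    have hval2 : H * (((2*k+2:ℕ):ℝ) * X^(2*k+2-1) * S)
        = H * (2*((k:ℝ)+1) * X^(2*k) * X * S) := by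
      simp only [show 2*k+2-1 = 2*k+1 from rfl, pow_succ]
      push_cast; ring
    have hzero : (((((2*k+1:ℕ):ℝ) * X^(2*k+1-1) * S) * C + X^(2*k+1) * (-S * W)) * r
          - (X^(2*k+1) * C) * ((((2:ℕ):ℝ) * X^(2-1) * S * S^2 + X^2 * (((2:ℕ):ℝ) * S^(2-1) * (C*W))
            + ((2:ℕ):ℝ) * C^(2-1) * (-S * W)) / (2 * r))) / r^2
          - H * (((2*k+2:ℕ):ℝ) * X^(2*k+2-1) * S) = 0 := by
      rw [hval, hval2, mul_div_cancel_right₀ _ (by positivity : (r:ℝ)^2 ≠ 0), sub_self]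
    rw [hzero] at hEd
    exact hEd
  -- constancy on the convex set Ioo a b
  have hdiff : DifferentiableOn ℝ E (Ioo a b) := fun s hs =>
    ((hDeriv s hs).differentiableAt).differentiableWithinAt
  have hconst : E s₁ = E s₂ := by
    apply (convex_Ioo a b).is_const_of_fderivWithin_eq_zero hdiff _ hs₁ hs₂
    intro s hs
    rw [fderivWithin_of_isOpen isOpen_Ioo hs]
    have := (hDeriv s hs).hasFDerivAt.fderiv
    rw [this]
    ext y
    simp
  simpa only [hE, hm1, hm2, show 2*k+2-1 = 2*k+1 from rfl] using hconst
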